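/- Let T > 0, r > 2, and let y : [0,T] → [0,∞) be absolutely continuous with y(0) = y(T), satisfying the differential inequality (1/2)y'(t) + c·y(t)^{r/2} ≤ g(t) for a.e. t ∈ (0,T), where c > 0 and g ∈ L¹(0,T), g ≥ 0. Then max_{[0,T]} y ≤ min_{[0,T]} y + 2∫₀ᵀ g(t)dt, and min_{[0,T]} y ≤ ((1/(cT))∫₀ᵀ g(t)dt)^{2/r}. Consequently sup_{[0,T]} y ≤ ((1/(cT))∫₀ᵀ g dt)^{2/r} + 2∫₀ᵀ g dt. -/

import Mathlib

open MeasureTheory Set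

theorem stmt_12 (T r c : ℝ) (hT : 0 < T) (hr : 2 < r) (hc : 0 < c)
    (y y' g : ℝ → ℝ)
    (hy0 : ∀ t ∈ Icc 0 T, 0 ≤ y t)
    (hderiv : ∀ t ∈ Icc 0 T, HasDerivWithinAt y (y' t) (Icc 0 T) t)
    (hy'int : IntervalIntegrable y' volume 0 T)
    (hper : y 0 = y T)
    (hg : IntervalIntegrable g volume 0 T) (hg0 : ∀ t ∈ Icc 0 T, 0 ≤ g t)
    (hineq : ∀ᵐ t ∂(volume.restrict (Ioo 0 T)),
      (1 / 2) * y' t + c * (y t) ^ (r / 2) ≤ g t) :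
    sSup (y '' Icc 0 T) ≤ sInf (y '' Icc 0 T) + 2 * ∫ t in (0 : ℝ)..T, g t ∧
    sInf (y '' Icc 0 T) ≤ ((1 / (c * T)) * ∫ t in (0 : ℝ)..T, g t) ^ (2 / r) ∧
    sSup (y '' Icc 0 T)
      ≤ ((1 / (c * T)) * ∫ t in (0 : ℝ)..T, g t) ^ (2 / r) + 2 * ∫ t in (0 : ℝ)..T, g t := by
  have hrpos : (0:ℝ) < r := lt_trans two_pos hr
  set I := ∫ t in (0:ℝ)..T, g t with hIdef
  have h0T : (0:ℝ) ∈ Icc 0 T := ⟨le_refl _, hT.le⟩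
  have hT0T : T ∈ Icc (0:ℝ) T := ⟨hT.le, le_refl _⟩
  have hycont : ContinuousOn y (Icc 0 T) := fun t ht => (hderiv t ht).continuousWithinAt
  have hcomp : IsCompact (y '' Icc 0 T) :=
    (isCompact_Icc.image_of_continuousOn hycont)
  have hne : (y '' Icc 0 T).Nonempty := ⟨y 0, mem_image_of_mem y h0T⟩
  -- extract max/min points
  obtain ⟨a, ha, haM⟩ : ∃ a ∈ Icc 0 T, y a = sSup (y '' Icc 0 T) := by
    have := hcomp.sSup_mem hne
    obtain ⟨a, ha, ha'⟩ := this
    exact ⟨a, ha, ha'⟩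
  obtain ⟨b, hb, hbm⟩ : ∃ b ∈ Icc 0 T, y b = sInf (y '' Icc 0 T) := by
    have := hcomp.sInf_mem hne
    obtain ⟨b, hb, hb'⟩ := this
    exact ⟨b, hb, hb'⟩
  -- subinterval integrability
  have hsubset : ∀ s t : ℝ, s ∈ Icc 0 T → t ∈ Icc 0 T → uIcc s t ⊆ uIcc 0 T := by
    intro s t hs ht
    apply uIcc_subset_uIcc
    · rw [uIcc_of_le hT.le]; exact hs
    · rw [uIcc_of_le hT.le]; exact ht
  have hgsub : ∀ s t : ℝ, s ∈ Icc 0 T → t ∈ Icc 0 T → IntervalIntegrable g volume s t :=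
    fun s t hs ht => hg.mono_set (hsubset s t hs ht)
  have hy'sub : ∀ s t : ℝ, s ∈ Icc 0 T → t ∈ Icc 0 T → IntervalIntegrable y' volume s t :=
    fun s t hs ht => hy'int.mono_set (hsubset s t hs ht)
  -- a.e. pointwise inequality on the open interval, in volume form
  have h1 : ∀ᵐ x ∂(volume : Measure ℝ), x ∈ Ioo 0 T →
      (1/2) * y' x + c * y x ^ (r/2) ≤ g x :=
    (ae_restrict_iff' measurableSet_Ioo).mp hineq
  have h2 : ∀ᵐ x ∂(volume : Measure ℝ), x ∉ ({0, T} : Set ℝ) := by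
    have hz : (volume : Measure ℝ) ({0, T} : Set ℝ) = 0 :=
      (Set.toFinite ({0, T} : Set ℝ)).measure_zero _
    exact measure_eq_zero_iff_ae_notMem.mp hz
  have hae : ∀ᵐ x ∂(volume : Measure ℝ), x ∈ Icc 0 T → y' x ≤ 2 * g x := by
    filter_upwards [h1, h2] with x hx1 hx2 hx
    have hxne : x ≠ 0 ∧ x ≠ T := by
      simp only [mem_insert_iff, mem_singleton_iff, not_or] at hx2
      exact hx2
    have hxo : x ∈ Ioo 0 T := ⟨lt_of_le_of_ne hx.1 (Ne.symm hxne.1), lt_of_le_of_ne hx.2 hxne.2⟩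
    have h3 := hx1 hxo
    have h4 : 0 ≤ c * y x ^ (r/2) :=
      mul_nonneg hc.le (Real.rpow_nonneg (hy0 x hx) _)
    linarith
  -- FTC
  have hFTC : ∀ s t : ℝ, 0 ≤ s → s ≤ t → t ≤ T → (∫ u in s..t, y' u) = y t - y s := by
    intro s t hs hst htT
    apply intervalIntegral.integral_eq_sub_of_hasDeriv_right_of_le hst
    · exact hycont.mono (Icc_subset_Icc hs htT)
    · intro x hx
      have hx' : x ∈ Icc 0 T := ⟨hs.trans hx.1.le, hx.2.le.trans htT⟩
      have hx'' : x ∈ Ico (0:ℝ) T := ⟨hs.trans hx.1.le, lt_of_lt_of_le hx.2 htT⟩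
      exact (hderiv x hx').mono_of_mem_nhdsWithin (Icc_mem_nhdsGT_of_mem hx'')
    · exact hy'sub s t ⟨hs, hst.trans htT⟩ ⟨hs.trans hst, htT⟩
  -- key oscillation estimate
  have hkey : ∀ s t : ℝ, 0 ≤ s → s ≤ t → t ≤ T → y t - y s ≤ 2 * ∫ u in s..t, g u := by
    intro s t hs hst htT
    have hsI : s ∈ Icc (0:ℝ) T := ⟨hs, hst.trans htT⟩
    have htI : t ∈ Icc (0:ℝ) T := ⟨hs.trans hst, htT⟩
    rw [← hFTC s t hs hst htT]
    have hmono : (∫ u in s..t, y' u) ≤ ∫ u in s..t, 2 * g u := by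
      apply intervalIntegral.integral_mono_ae_restrict hst (hy'sub s t hsI htI)
        ((hgsub s t hsI htI).const_mul 2)
      refine (ae_restrict_iff' measurableSet_Icc).mpr ?_
      filter_upwards [hae] with x hx hx'
      exact hx ⟨hs.trans hx'.1, hx'.2.trans htT⟩
    rw [intervalIntegral.integral_const_mul] at hmono
    exact hmono
  have hgnn : ∀ s t : ℝ, 0 ≤ s → s ≤ t → t ≤ T → 0 ≤ ∫ u in s..t, g u := by
    intro s t hs hst htT
    exact intervalIntegral.integral_nonneg hst
      (fun u hu => hg0 u ⟨hs.trans hu.1, hu.2.trans htT⟩)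
  -- splitting of the integral of g
  have hsplit : ∀ s t : ℝ, 0 ≤ s → s ≤ t → t ≤ T →
      (∫ u in (0:ℝ)..s, g u) + (∫ u in s..t, g u) + (∫ u in t..T, g u) = I := by
    intro s t hs hst htT
    have hsI : s ∈ Icc (0:ℝ) T := ⟨hs, hst.trans htT⟩
    have htI : t ∈ Icc (0:ℝ) T := ⟨hs.trans hst, htT⟩
    rw [intervalIntegral.integral_add_adjacent_intervals (hgsub 0 s h0T hsI)
      (hgsub s t hsI htI), intervalIntegral.integral_add_adjacent_intervals
      (hgsub 0 t h0T htI) (hgsub t T htI hT0T)]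
  -- Part 1
  have part1 : sSup (y '' Icc 0 T) ≤ sInf (y '' Icc 0 T) + 2 * I := by
    rw [← haM, ← hbm]
    rcases le_total b a with h | h
    · have hk := hkey b a hb.1 h ha.2
      have hs := hsplit b a hb.1 h ha.2
      have h1' := hgnn 0 b (le_refl 0) hb.1 hb.2
      have h2' := hgnn a T ha.1 ha.2 (le_refl T)
      linarith
    · have hk1 := hkey 0 a (le_refl 0) ha.1 ha.2
      have hk2 := hkey b T hb.1 hb.2 (le_refl T)
      have hs := hsplit a b ha.1 h hb.2
      have h3' := hgnn a b ha.1 h hb.2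
      linarith
  -- Part 2
  have hyb0 : 0 ≤ y b := hy0 b hb
  have hycontp : ContinuousOn (fun x => y x ^ (r/2)) (Icc 0 T) :=
    hycont.rpow_const (fun x hx => Or.inr (by positivity))
  have hy2int : IntervalIntegrable (fun x => y x ^ (r/2)) volume 0 T := by
    apply ContinuousOn.intervalIntegrable
    rw [uIcc_of_le hT.le]
    exact hycontp
  have hsum : (∫ t in (0:ℝ)..T, ((1/2) * y' t + c * y t ^ (r/2))) ≤ I := by
    apply intervalIntegral.integral_mono_ae_restrict hT.le
      ((hy'int.const_mul (1/2)).add (hy2int.const_mul c)) hg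
    refine (ae_restrict_iff' measurableSet_Icc).mpr ?_
    filter_upwards [h1, h2] with x hx1 hx2 hx
    have hxne : x ≠ 0 ∧ x ≠ T := by
      simp only [mem_insert_iff, mem_singleton_iff, not_or] at hx2
      exact hx2
    exact hx1 ⟨lt_of_le_of_ne hx.1 (Ne.symm hxne.1), lt_of_le_of_ne hx.2 hxne.2⟩
  have hsum' : c * (∫ t in (0:ℝ)..T, y t ^ (r/2)) ≤ I := by
    rw [intervalIntegral.integral_add (hy'int.const_mul (1/2)) (hy2int.const_mul c),
      intervalIntegral.integral_const_mul, intervalIntegral.integral_const_mul,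
      hFTC 0 T (le_refl 0) hT.le (le_refl T), hper] at hsum
    linarith
  have hlow : T * y b ^ (r/2) ≤ ∫ t in (0:ℝ)..T, y t ^ (r/2) := by
    have hmon : (∫ t in (0:ℝ)..T, (y b ^ (r/2) : ℝ)) ≤ ∫ t in (0:ℝ)..T, y t ^ (r/2) := by
      apply intervalIntegral.integral_mono_on hT.le intervalIntegrable_const hy2int
      intro x hx
      have hle : y b ≤ y x := by
        rw [hbm]
        exact csInf_le hcomp.bddBelow (mem_image_of_mem y hx)
      exact Real.rpow_le_rpow hyb0 hle (by positivity)
    rwa [intervalIntegral.integral_const, smul_eq_mul, sub_zero] at hmon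
  have hpow : y b ^ (r/2) ≤ (1/(c*T)) * I := by
    have hcT : 0 < c * T := mul_pos hc hT
    rw [one_div, inv_mul_eq_div, le_div_iff₀ hcT]
    nlinarith
  have part2 : sInf (y '' Icc 0 T) ≤ ((1/(c*T)) * I) ^ (2/r) := by
    rw [← hbm]
    have hr2 : r/2 * (2/r) = 1 := by field_simp
    have heq : y b = (y b ^ (r/2)) ^ (2/r) := by
      rw [← Real.rpow_mul hyb0, hr2, Real.rpow_one]
    rw [heq]
    exact Real.rpow_le_rpow (Real.rpow_nonneg hyb0 _) hpow (by positivity)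
  exact ⟨part1, part2, le_trans part1 (by linarith)⟩
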